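/- arXiv:0803.2486 — 3 statements merged into one kernel-verified Lean document; each statement's English description precedes it below -/
import Mathlib

section
/- Let 0 < ν < 1 and let S_{k,ℓ} = S_k^{(ν)} + S_ℓ^{(1−ν)} be the sum of independent binomial random variables with parameters (k, ν) and (ℓ, 1−ν). Then there exists a universal constant D > 0 such that for all integers k, ℓ > 1 and all 0 ≤ i ≤ k+ℓ, P(S_{k,ℓ} = i) ≤ D/(ν(1−ν)(k+ℓ)^{1/2}). -/
open Finset Real Nat

/-- Probability that a binomial random variable with parameters `(n, p)` equals `j`. -/
noncomputable def binomPMF (n : ℕ) (p : ℝ) (j : ℕ) : ℝ :=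
  (n.choose j : ℝ) * p ^ j * (1 - p) ^ (n - j)

/-- Probability that the sum `S_{k,ℓ} = S_k^{(ν)} + S_ℓ^{(1−ν)}` of two independent
binomial random variables with parameters `(k, ν)` and `(ℓ, 1−ν)` equals `i`. -/
noncomputable def sumBinomPMF (k ℓ : ℕ) (ν : ℝ) (i : ℕ) : ℝ :=
  ∑ u ∈ Finset.range (i + 1), binomPMF k ν u * binomPMF ℓ (1 - ν) (i - u)


lemma binomPMF_nonneg {p : ℝ} (hp0 : 0 ≤ p) (hp1 : p ≤ 1) (n j : ℕ) : 0 ≤ binomPMF n p j := by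
  have h : 0 ≤ 1 - p := by linarith
  unfold binomPMF; positivity

lemma sum_binomPMF_le_one {p : ℝ} (hp0 : 0 ≤ p) (hp1 : p ≤ 1) (n N : ℕ) :
    ∑ v ∈ Finset.range (N + 1), binomPMF n p v ≤ 1 := by
  have key : ∀ M : ℕ, n ≤ M → ∑ v ∈ Finset.range (M + 1), binomPMF n p v = 1 := by
    intro M hM
    have h1 : ∑ v ∈ Finset.range (n + 1), binomPMF n p v = 1 := by
      have := add_pow p (1 - p) n
      simp only [add_sub_cancel, one_pow] at this
      rw [show (1:ℝ) = (p + (1-p))^n by ring_nf]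
      rw [add_pow]
      refine Finset.sum_congr rfl fun v _ => ?_
      unfold binomPMF; ring
    rw [← h1]
    refine (Finset.sum_subset (by gcongr <;> omega) fun v _ hv => ?_).symm
    have : n < v := by simp at hv; omega
    simp [binomPMF, Nat.choose_eq_zero_of_lt this]
  calc ∑ v ∈ Finset.range (N + 1), binomPMF n p v
      ≤ ∑ v ∈ Finset.range (max N n + 1), binomPMF n p v := by
        refine Finset.sum_le_sum_of_subset_of_nonneg (by gcongr <;> omega)
          fun v _ _ => binomPMF_nonneg hp0 hp1 n v
    _ = 1 := key _ (le_max_right _ _)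

lemma binomPMF_le_one {p : ℝ} (hp0 : 0 ≤ p) (hp1 : p ≤ 1) (n j : ℕ) : binomPMF n p j ≤ 1 := by
  calc binomPMF n p j ≤ ∑ v ∈ Finset.range (j + 1), binomPMF n p v :=
        Finset.single_le_sum (fun v _ => binomPMF_nonneg hp0 hp1 n v) (self_mem_range_succ j)
    _ ≤ 1 := sum_binomPMF_le_one hp0 hp1 n j

lemma binomPMF_ratio {p : ℝ} {n j : ℕ} (hj : j < n) :
    binomPMF n p (j + 1) * ((j + 1 : ℝ) * (1 - p)) = binomPMF n p j * (((n : ℝ) - j) * p) := by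
  have hc : (n.choose (j + 1) : ℝ) * (j + 1) = (n.choose j : ℝ) * ((n : ℝ) - j) := by
    have := Nat.choose_succ_right_eq n j
    have h2 : ((n.choose (j+1) * (j+1) : ℕ) : ℝ) = ((n.choose j * (n - j) : ℕ) : ℝ) := by
      exact_mod_cast congrArg (Nat.cast : ℕ → ℝ) this
    push_cast [Nat.cast_sub hj.le] at h2
    linarith [h2]
  unfold binomPMF
  rw [show n - j = n - (j + 1) + 1 from by omega, pow_succ (1 - p)]
  push_cast
  linear_combination (p ^ (j + 1) * (1 - p) ^ (n - (j + 1)) * (1 - p)) * hc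

lemma binomPMF_le_mode {p : ℝ} {n : ℕ} (hp0 : 0 < p) (hp1 : p < 1) (j : ℕ) :
    binomPMF n p j ≤ binomPMF n p (⌊((n : ℝ) + 1) * p⌋₊) := by
  set m := ⌊((n : ℝ) + 1) * p⌋₊ with hm
  have hq0 : (0:ℝ) < 1 - p := by linarith
  have hmle : (m : ℝ) ≤ ((n : ℝ) + 1) * p := Nat.floor_le (by positivity)
  have hltm : ((n : ℝ) + 1) * p < (m : ℝ) + 1 := Nat.lt_floor_add_one _
  have hnn := binomPMF_nonneg hp0.le hp1.le (p := p) n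
  -- increasing before the mode
  have inc : ∀ j : ℕ, j + 1 ≤ m → binomPMF n p j ≤ binomPMF n p (j + 1) := by
    intro j hj
    have hj1 : (j : ℝ) + 1 ≤ ((n : ℝ) + 1) * p := by
      calc ((j : ℝ) + 1) ≤ (m : ℝ) := by exact_mod_cast hj
        _ ≤ _ := hmle
    have hjn : j < n := by
      have h3 : ((j : ℝ) + 1) < (n : ℝ) + 1 := lt_of_le_of_lt hj1 (by nlinarith)
      have h4 : (j : ℝ) < n := by linarith
      exact_mod_cast h4
    have hr := binomPMF_ratio (p := p) hjn
    have hkey : ((j : ℝ) + 1) * (1 - p) ≤ ((n : ℝ) - j) * p := by nlinarith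
    have hpos : (0:ℝ) < ((n : ℝ) - j) * p := by
      have : (j:ℝ) < n := by exact_mod_cast hjn
      nlinarith
    have : binomPMF n p j * (((n : ℝ) - j) * p) ≤ binomPMF n p (j + 1) * (((n : ℝ) - j) * p) := by
      rw [← hr]
      exact mul_le_mul_of_nonneg_left hkey (hnn (j + 1))
    exact le_of_mul_le_mul_right this hpos
  -- decreasing after the mode
  have dec : ∀ j : ℕ, m ≤ j → binomPMF n p (j + 1) ≤ binomPMF n p j := by
    intro j hj
    rcases lt_or_ge j n with hjn | hjn
    · have hr := binomPMF_ratio (p := p) hjn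
      have hj1 : ((n : ℝ) + 1) * p < (j : ℝ) + 1 := by
        calc ((n : ℝ) + 1) * p < (m : ℝ) + 1 := hltm
          _ ≤ (j : ℝ) + 1 := by exact_mod_cast add_le_add_left (Nat.cast_le.2 hj) 1
      have hkey : ((n : ℝ) - j) * p ≤ ((j : ℝ) + 1) * (1 - p) := by nlinarith
      have hpos : (0:ℝ) < ((j : ℝ) + 1) * (1 - p) := by positivity
      have : binomPMF n p (j + 1) * (((j : ℝ) + 1) * (1 - p)) ≤
          binomPMF n p j * (((j : ℝ) + 1) * (1 - p)) := by
        rw [hr]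
        exact mul_le_mul_of_nonneg_left hkey (hnn j)
      exact le_of_mul_le_mul_right this hpos
    · have : n < j + 1 := by omega
      simp only [binomPMF, Nat.choose_eq_zero_of_lt this, Nat.cast_zero, zero_mul]
      exact hnn j
  have up : ∀ d j : ℕ, j + d = m → binomPMF n p j ≤ binomPMF n p m := by
    intro d
    induction d with
    | zero => intro j hj; simp at hj; rw [hj]
    | succ d ih =>
      intro j hj
      exact le_trans (inc j (by omega)) (ih (j + 1) (by omega))
  have down : ∀ d : ℕ, binomPMF n p (m + d) ≤ binomPMF n p m := by
    intro d
    induction d with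
    | zero => simp
    | succ d ih => exact le_trans (dec (m + d) (by omega)) ih
  rcases le_or_gt j m with h | h
  · exact up (m - j) j (by omega)
  · have := down (j - m)
    rwa [show m + (j - m) = j from by omega] at this

lemma amgm_pow {p : ℝ} {n j : ℕ} (hp0 : 0 < p) (hp1 : p < 1) (hj0 : 0 < j) (hjn : j < n) :
    p ^ j * (1 - p) ^ (n - j) ≤ ((j : ℝ) / n) ^ j * (((n : ℝ) - j) / n) ^ (n - j) := by
  have hq0 : (0:ℝ) < 1 - p := by linarith
  have hjr : (0:ℝ) < j := by exact_mod_cast hj0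
  have hnr : (0:ℝ) < n := by exact_mod_cast hj0.trans hjn
  have hnj : (0:ℝ) < (n:ℝ) - j := by
    have : (j:ℝ) < n := by exact_mod_cast hjn
    linarith
  set w₁ : ℝ := (j : ℝ) / n with hw₁
  set w₂ : ℝ := ((n : ℝ) - j) / n with hw₂
  set a : ℝ := p * n / j with ha
  set b : ℝ := (1 - p) * n / ((n : ℝ) - j) with hb
  have hw : w₁ + w₂ = 1 := by rw [hw₁, hw₂]; field_simp; ring
  have hgm : a ^ w₁ * b ^ w₂ ≤ 1 := by
    have := Real.geom_mean_le_arith_mean2_weighted (le_of_lt (by positivity : (0:ℝ) < w₁))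
      (le_of_lt (by positivity : (0:ℝ) < w₂)) (le_of_lt (by positivity : (0:ℝ) < a))
      (le_of_lt (by positivity : (0:ℝ) < b)) hw
    have he : w₁ * a + w₂ * b = 1 := by rw [hw₁, hw₂, ha, hb]; field_simp; ring
    linarith [this, he.le]
  have hpow : a ^ j * b ^ (n - j) ≤ 1 := by
    have h1 : (a ^ w₁ * b ^ w₂) ^ (n : ℕ) ≤ 1 := by
      exact pow_le_one₀ (by positivity) hgm
    have h2 : (a ^ w₁ * b ^ w₂) ^ (n : ℕ) = a ^ j * b ^ (n - j) := by
      rw [mul_pow, ← Real.rpow_natCast (a ^ w₁) n, ← Real.rpow_natCast (b ^ w₂) n,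
        ← Real.rpow_mul (by positivity), ← Real.rpow_mul (by positivity)]
      have e1 : w₁ * n = (j : ℝ) := by rw [hw₁]; field_simp
      have e2 : w₂ * n = ((n - j : ℕ) : ℝ) := by
        rw [Nat.cast_sub hjn.le, hw₂]; field_simp
      rw [e1, e2, Real.rpow_natCast, Real.rpow_natCast]
    rwa [h2] at h1
  have key : p ^ j * (1 - p) ^ (n - j) =
      (a ^ j * b ^ (n - j)) * (w₁ ^ j * w₂ ^ (n - j)) := by
    rw [show a ^ j * b ^ (n-j) * (w₁ ^ j * w₂ ^ (n-j)) = (a * w₁) ^ j * (b * w₂) ^ (n-j) from by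
      rw [mul_pow, mul_pow]; ring]
    have e1 : a * w₁ = p := by rw [ha, hw₁]; field_simp
    have e2 : b * w₂ = 1 - p := by rw [hb, hw₂]; field_simp
    rw [e1, e2]
  rw [key]
  calc (a ^ j * b ^ (n - j)) * (w₁ ^ j * w₂ ^ (n - j))
      ≤ 1 * (w₁ ^ j * w₂ ^ (n - j)) := by
        exact mul_le_mul_of_nonneg_right hpow (by positivity)
    _ = w₁ ^ j * w₂ ^ (n - j) := one_mul _

lemma stirling_den_pos {n : ℕ} (hn : 0 < n) : (0:ℝ) < √(2 * n) * ((n : ℝ) / Real.exp 1) ^ n := by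
  have hnr : (0:ℝ) < n := by exact_mod_cast hn
  positivity

lemma sqrtpi_le_stirlingSeq (k : ℕ) : √π ≤ Stirling.stirlingSeq (k + 1) :=
  Stirling.stirlingSeq'_antitone.le_of_tendsto
    (Stirling.tendsto_stirlingSeq_sqrt_pi.comp (Filter.tendsto_add_atTop_nat 1)) k

lemma stirling_lower (n : ℕ) (hn : 0 < n) :
    √π * (√(2 * n) * ((n : ℝ) / Real.exp 1) ^ n) ≤ (n ! : ℝ) := by
  obtain ⟨k, rfl⟩ : ∃ k, n = k + 1 := ⟨n - 1, by omega⟩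
  have h := sqrtpi_le_stirlingSeq k
  have hd := stirling_den_pos hn
  rw [Stirling.stirlingSeq, le_div_iff₀ hd] at h
  linarith [h]

lemma stirling_upper (n : ℕ) (hn : 0 < n) :
    (n ! : ℝ) ≤ (Real.exp 1 / √2) * (√(2 * n) * ((n : ℝ) / Real.exp 1) ^ n) := by
  obtain ⟨k, rfl⟩ : ∃ k, n = k + 1 := ⟨n - 1, by omega⟩
  have h : Stirling.stirlingSeq (k + 1) ≤ Stirling.stirlingSeq 1 :=
    Stirling.stirlingSeq'_antitone (Nat.zero_le k)
  rw [Stirling.stirlingSeq_one] at h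
  have hd := stirling_den_pos hn
  rw [Stirling.stirlingSeq, div_le_iff₀ hd] at h
  linarith [h]

set_option maxHeartbeats 1000000 in
lemma choose_bound {n j : ℕ} (hj0 : 0 < j) (hjn : j < n) :
    (n.choose j : ℝ) * (((j : ℝ) / n) ^ j * (((n : ℝ) - j) / n) ^ (n - j)) ≤
      Real.sqrt ((n : ℝ) / ((j : ℝ) * ((n : ℝ) - j))) := by
  have hn0 : 0 < n := hj0.trans hjn
  have hjr : (0:ℝ) < j := by exact_mod_cast hj0
  have hnr : (0:ℝ) < n := by exact_mod_cast hn0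
  have hjltn : (j:ℝ) < n := by exact_mod_cast hjn
  have hnjr : (0:ℝ) < (n:ℝ) - j := by linarith
  have hcast : ((n - j : ℕ) : ℝ) = (n:ℝ) - j := by
    rw [Nat.cast_sub hjn.le]
  have he : (0:ℝ) < Real.exp 1 := Real.exp_pos 1
  set e : ℝ := Real.exp 1
  -- factorial bounds
  have hU := stirling_upper n hn0
  have hLj := stirling_lower j hj0
  have hLnj := stirling_lower (n - j) (by omega)
  rw [hcast] at hLnj
  set U : ℝ := (e / √2) * (√(2 * n) * ((n : ℝ) / e) ^ n) with hUdef
  set Lj : ℝ := √π * (√(2 * j) * ((j : ℝ) / e) ^ j) with hLjdef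
  set Lnj : ℝ := √π * (√(2 * ((n:ℝ) - j)) * (((n:ℝ) - j) / e) ^ (n - j)) with hLnjdef
  have hLjpos : 0 < Lj := by
    have := Real.sqrt_pos.2 Real.pi_pos
    positivity
  have hLnjpos : 0 < Lnj := by
    have := Real.sqrt_pos.2 Real.pi_pos
    positivity
  have hchoose : (n.choose j : ℝ) ≤ U / (Lj * Lnj) := by
    rw [Nat.cast_choose ℝ hjn.le]
    refine div_le_div₀ (by positivity) hU (by positivity) ?_
    have h1 : (0:ℝ) ≤ (j ! : ℝ) := by positivity
    calc Lj * Lnj ≤ (j ! : ℝ) * Lnj := mul_le_mul_of_nonneg_right hLj hLnjpos.le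
      _ ≤ (j ! : ℝ) * ((n - j)! : ℝ) := by
          exact mul_le_mul_of_nonneg_left hLnj h1
  set W : ℝ := ((j : ℝ) / n) ^ j * (((n : ℝ) - j) / n) ^ (n - j) with hW
  have hWpos : 0 < W := by rw [hW]; positivity
  have step1 : (n.choose j : ℝ) * W ≤ U / (Lj * Lnj) * W :=
    mul_le_mul_of_nonneg_right hchoose hWpos.le
  set B : ℝ := ((j:ℝ)/e)^j * (((n:ℝ)-j)/e)^(n-j) with hB
  have hBpos : 0 < B := by rw [hB]; positivity
  have hAB : ((n:ℝ)/e)^n * W = B := by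
    have hsplit : ((n:ℝ)/e)^n = ((n:ℝ)/e)^j * ((n:ℝ)/e)^(n-j) := by
      rw [← pow_add]; congr 1; omega
    rw [hW, hB, hsplit]
    rw [show ((n:ℝ)/e)^j * ((n:ℝ)/e)^(n-j) * (((j:ℝ)/n)^j * (((n:ℝ)-j)/n)^(n-j)) =
        (((n:ℝ)/e) * ((j:ℝ)/n))^j * (((n:ℝ)/e) * (((n:ℝ)-j)/n))^(n-j) from by
          rw [mul_pow, mul_pow]; ring]
    congr 2
    · field_simp
    · field_simp
  set S : ℝ := √(2*(j:ℝ)) * √(2*((n:ℝ)-j)) with hS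
  have hSpos : 0 < S := by
    rw [hS]
    have h1 : (0:ℝ) < √(2*(j:ℝ)) := Real.sqrt_pos.2 (by positivity)
    have h2 : (0:ℝ) < √(2*((n:ℝ)-j)) := Real.sqrt_pos.2 (by positivity)
    positivity
  have heq : U / (Lj * Lnj) * W = ((e/√2) * √(2*(n:ℝ))) / (π * S) := by
    have hnum : U * W = ((e/√2) * √(2*(n:ℝ))) * B := by
      rw [hUdef, ← hAB]; ring
    have hden : Lj * Lnj = (π * S) * B := by
      rw [hLjdef, hLnjdef, hS, hB]
      have h5 : √π * √π = π := Real.mul_self_sqrt Real.pi_pos.le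
      linear_combination (√(2*(j:ℝ)) * √(2*((n:ℝ)-j)) * ((j:ℝ)/e)^j * (((n:ℝ)-j)/e)^(n-j)) * h5
    rw [div_mul_eq_mul_div, hnum, hden, mul_div_mul_right _ _ hBpos.ne']
  have hs2 : √2 * √2 = (2:ℝ) := Real.mul_self_sqrt (by norm_num)
  have hs2pos : (0:ℝ) < √2 := Real.sqrt_pos.2 (by norm_num)
  have h2n : √(2*(n:ℝ)) = √2 * √(n:ℝ) := Real.sqrt_mul (by norm_num) _
  have h2j : √(2*(j:ℝ)) = √2 * √(j:ℝ) := Real.sqrt_mul (by norm_num) _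
  have h2nj : √(2*((n:ℝ)-j)) = √2 * √((n:ℝ)-j) := Real.sqrt_mul (by norm_num) _
  have hxpos : (0:ℝ) < √(n:ℝ) := Real.sqrt_pos.2 hnr
  have hypos : (0:ℝ) < √(j:ℝ) := Real.sqrt_pos.2 hjr
  have hzpos : (0:ℝ) < √((n:ℝ)-j) := Real.sqrt_pos.2 hnjr
  have hrhs : Real.sqrt ((n : ℝ) / ((j : ℝ) * ((n : ℝ) - j))) =
      √(n:ℝ) / (√(j:ℝ) * √((n:ℝ)-j)) := by
    rw [Real.sqrt_div hnr.le, Real.sqrt_mul hjr.le]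
  have hfin : ((e/√2) * √(2*(n:ℝ))) / (π * S) ≤ √(n:ℝ) / (√(j:ℝ) * √((n:ℝ)-j)) := by
    rw [hS, h2n, h2j, h2nj]
    have hepi : e ≤ 2 * π := by
      have h1 := Real.exp_one_lt_d9
      have h2 := Real.pi_gt_d6
      rw [show e = Real.exp 1 from rfl]
      linarith
    rw [div_le_div_iff₀ (by positivity) (by positivity)]
    have hexp : e/√2 * (√2 * √(n:ℝ)) = e * √(n:ℝ) := by
      field_simp
    rw [hexp]
    have hgoal : √(n:ℝ) * (π * (√2*√(j:ℝ) * (√2*√((n:ℝ)-j)))) =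
        (2*π) * (√(n:ℝ) * (√(j:ℝ)*√((n:ℝ)-j))) := by
      linear_combination (√(n:ℝ)*π*√(j:ℝ)*√((n:ℝ)-j)) * hs2
    rw [hgoal, mul_assoc]
    exact mul_le_mul_of_nonneg_right hepi (by positivity)
  calc (n.choose j : ℝ) * W ≤ U / (Lj * Lnj) * W := step1
    _ = ((e/√2) * √(2*(n:ℝ))) / (π * S) := heq
    _ ≤ _ := by rw [hrhs]; exact hfin

lemma binomPMF_le_two_div {p : ℝ} {n : ℕ} (hp0 : 0 < p) (hp1 : p < 1) (hn : 0 < n) (j : ℕ) :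
    binomPMF n p j ≤ 2 / Real.sqrt ((n : ℝ) * p * (1 - p)) := by
  have hq0 : (0:ℝ) < 1 - p := by linarith
  have hnr : (0:ℝ) < n := by exact_mod_cast hn
  have hσpos : (0:ℝ) < (n:ℝ) * p * (1 - p) := by positivity
  have hsp : (0:ℝ) < Real.sqrt ((n:ℝ) * p * (1 - p)) := Real.sqrt_pos.2 hσpos
  by_cases hbig : 2 ≤ (n:ℝ) * p ∧ 2 ≤ (n:ℝ) * (1 - p)
  · obtain ⟨hnp, hnq⟩ := hbig
    set m := ⌊((n : ℝ) + 1) * p⌋₊ with hm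
    have hmle : (m : ℝ) ≤ ((n : ℝ) + 1) * p := Nat.floor_le (by positivity)
    have hltm : ((n : ℝ) + 1) * p < (m : ℝ) + 1 := Nat.lt_floor_add_one _
    have hmlb : (n:ℝ) * p / 2 ≤ (m:ℝ) := by nlinarith
    have hmub : (n:ℝ) - (m:ℝ) ≥ (n:ℝ) * (1 - p) / 2 := by nlinarith
    have hm0 : 0 < m := by
      have : (0:ℝ) < (m:ℝ) := by nlinarith
      exact_mod_cast this
    have hmn : m < n := by
      have : (m:ℝ) < (n:ℝ) := by nlinarith
      exact_mod_cast this
    have hmr : (0:ℝ) < m := by exact_mod_cast hm0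
    have hnmr : (0:ℝ) < (n:ℝ) - m := by
      have : (m:ℝ) < (n:ℝ) := by exact_mod_cast hmn
      linarith
    calc binomPMF n p j ≤ binomPMF n p m := binomPMF_le_mode hp0 hp1 j
      _ = (n.choose m : ℝ) * (p ^ m * (1 - p) ^ (n - m)) := by unfold binomPMF; ring
      _ ≤ (n.choose m : ℝ) * (((m : ℝ) / n) ^ m * (((n : ℝ) - m) / n) ^ (n - m)) :=
          mul_le_mul_of_nonneg_left (amgm_pow hp0 hp1 hm0 hmn) (by positivity)
      _ ≤ Real.sqrt ((n : ℝ) / ((m : ℝ) * ((n : ℝ) - m))) := choose_bound hm0 hmn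
      _ ≤ Real.sqrt (4 / ((n:ℝ) * p * (1 - p))) := by
          apply Real.sqrt_le_sqrt
          rw [div_le_div_iff₀ (by positivity) hσpos]
          nlinarith
      _ = 2 / Real.sqrt ((n : ℝ) * p * (1 - p)) := by
          rw [Real.sqrt_div (by norm_num : (0:ℝ) ≤ 4),
            show Real.sqrt (4:ℝ) = 2 from by
              rw [show (4:ℝ) = 2^2 by norm_num, Real.sqrt_sq (by norm_num)]]
  · have hσlt2 : (n:ℝ) * p * (1 - p) < 2 := by
      rcases not_and_or.mp hbig with h | h
      · push_neg at h; nlinarith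
      · push_neg at h; nlinarith
    have h2 : Real.sqrt ((n:ℝ) * p * (1 - p)) < Real.sqrt 2 :=
      Real.sqrt_lt_sqrt hσpos.le hσlt2
    have hs2 : Real.sqrt 2 * Real.sqrt 2 = 2 := Real.mul_self_sqrt (by norm_num)
    have h1 : (1:ℝ) ≤ 2 / Real.sqrt ((n:ℝ) * p * (1 - p)) := by
      rw [le_div_iff₀ hsp]
      nlinarith [Real.sqrt_nonneg 2, sq_nonneg (Real.sqrt 2 - 1)]
    exact le_trans (binomPMF_le_one hp0.le hp1.le n j) h1

lemma tail_bound {s x y : ℝ} (hs0 : 0 < s) (hs : s ≤ 1/4) (hx : 0 < x) (hy : 0 ≤ y)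
    (hyx : y ≤ x) : 2 / Real.sqrt (x * s) ≤ 4 / (s * Real.sqrt (x + y)) := by
  have hxy : (0:ℝ) < x + y := by linarith
  have hsq : (0:ℝ) < Real.sqrt (x + y) := Real.sqrt_pos.2 hxy
  have hxs : (0:ℝ) < Real.sqrt (x * s) := Real.sqrt_pos.2 (by positivity)
  rw [div_le_div_iff₀ hxs (by positivity)]
  have h1 : Real.sqrt (x + y) ≤ Real.sqrt (2 * x) := Real.sqrt_le_sqrt (by linarith)
  have h2 : Real.sqrt (x * s) = Real.sqrt x * Real.sqrt s := Real.sqrt_mul hx.le _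
  have h3 : Real.sqrt (2 * x) = Real.sqrt 2 * Real.sqrt x := Real.sqrt_mul (by norm_num) _
  have h4 : Real.sqrt s * Real.sqrt s = s := Real.mul_self_sqrt hs0.le
  have h5 : Real.sqrt s ≤ 1/2 := by nlinarith [Real.sqrt_nonneg s]
  have h6 : Real.sqrt 2 ≤ 3/2 := by
    nlinarith [Real.mul_self_sqrt (show (0:ℝ) ≤ 2 by norm_num), Real.sqrt_nonneg 2,
      sq_nonneg (Real.sqrt 2 - 3/2)]
  have h7 : (0:ℝ) ≤ Real.sqrt x := Real.sqrt_nonneg x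
  have h8 : (0:ℝ) ≤ Real.sqrt s := Real.sqrt_nonneg s
  rw [h2]
  have h9 : s * Real.sqrt (x + y) ≤ s * (Real.sqrt 2 * Real.sqrt x) := by
    rw [← h3]; exact mul_le_mul_of_nonneg_left h1 hs0.le
  nlinarith [mul_nonneg h7 h8, mul_nonneg (mul_nonneg h7 h8) h8]

theorem sumBinom_pointwise_bound :
    ∃ D > (0 : ℝ), ∀ ν : ℝ, 0 < ν → ν < 1 → ∀ k ℓ i : ℕ, 1 < k → 1 < ℓ →
      i ≤ k + ℓ →
      sumBinomPMF k ℓ ν i ≤ D / (ν * (1 - ν) * Real.sqrt (k + ℓ)) := by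
  refine ⟨4, by norm_num, ?_⟩
  intro ν h0 h1 k ℓ i hk hℓ _
  have hq0 : (0:ℝ) < 1 - ν := by linarith
  have hs0 : (0:ℝ) < ν * (1 - ν) := by positivity
  have hs4 : ν * (1 - ν) ≤ 1/4 := by nlinarith [sq_nonneg (2*ν - 1)]
  have hkr : (0:ℝ) < k := by exact_mod_cast show 0 < k by omega
  have hlr : (0:ℝ) < ℓ := by exact_mod_cast show 0 < ℓ by omega
  rcases le_total (ℓ : ℝ) (k : ℝ) with hlk | hkl
  · have hb := binomPMF_le_two_div h0 h1 (show 0 < k by omega)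
    have step : sumBinomPMF k ℓ ν i ≤
        (2 / Real.sqrt ((k:ℝ) * ν * (1 - ν))) *
          ∑ u ∈ Finset.range (i + 1), binomPMF ℓ (1 - ν) (i - u) := by
      rw [sumBinomPMF, Finset.mul_sum]
      exact Finset.sum_le_sum fun u _ =>
        mul_le_mul_of_nonneg_right (hb u) (binomPMF_nonneg (by linarith) (by linarith) ℓ (i - u))
    have hsum : ∑ u ∈ Finset.range (i + 1), binomPMF ℓ (1 - ν) (i - u) ≤ 1 := by
      have hr := Finset.sum_range_reflect (fun v => binomPMF ℓ (1 - ν) v) (i + 1)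
      simp only [Nat.add_sub_cancel] at hr
      rw [hr]
      exact sum_binomPMF_le_one (by linarith) (by linarith) ℓ i
    have hW : (0:ℝ) ≤ 2 / Real.sqrt ((k:ℝ) * ν * (1 - ν)) := by positivity
    calc sumBinomPMF k ℓ ν i
        ≤ (2 / Real.sqrt ((k:ℝ) * ν * (1 - ν))) * 1 :=
          le_trans step (mul_le_mul_of_nonneg_left hsum hW)
      _ = 2 / Real.sqrt ((k:ℝ) * (ν * (1 - ν))) := by rw [mul_one, mul_assoc]
      _ ≤ 4 / ((ν * (1 - ν)) * Real.sqrt ((k:ℝ) + (ℓ:ℝ))) :=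
          tail_bound hs0 hs4 hkr hlr.le hlk
      _ = 4 / (ν * (1 - ν) * Real.sqrt ((k:ℕ) + (ℓ:ℕ) : ℝ)) := by push_cast; ring_nf
  · have hb := binomPMF_le_two_div (show (0:ℝ) < 1 - ν from hq0)
      (show (1:ℝ) - ν < 1 by linarith) (show 0 < ℓ by omega)
    have hb' : ∀ v, binomPMF ℓ (1 - ν) v ≤ 2 / Real.sqrt ((ℓ:ℝ) * (ν * (1 - ν))) := by
      intro v
      have := hb v
      rw [show (1:ℝ) - (1 - ν) = ν by ring] at this
      rwa [show (ℓ:ℝ) * (1 - ν) * ν = (ℓ:ℝ) * (ν * (1 - ν)) by ring] at this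
    have step : sumBinomPMF k ℓ ν i ≤
        (∑ u ∈ Finset.range (i + 1), binomPMF k ν u) *
          (2 / Real.sqrt ((ℓ:ℝ) * (ν * (1 - ν)))) := by
      rw [sumBinomPMF, Finset.sum_mul]
      exact Finset.sum_le_sum fun u _ =>
        mul_le_mul_of_nonneg_left (hb' (i - u)) (binomPMF_nonneg h0.le h1.le k u)
    have hsum : ∑ u ∈ Finset.range (i + 1), binomPMF k ν u ≤ 1 :=
      sum_binomPMF_le_one h0.le h1.le k i
    have hW : (0:ℝ) ≤ 2 / Real.sqrt ((ℓ:ℝ) * (ν * (1 - ν))) := by positivity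
    calc sumBinomPMF k ℓ ν i
        ≤ 1 * (2 / Real.sqrt ((ℓ:ℝ) * (ν * (1 - ν)))) :=
          le_trans step (mul_le_mul_of_nonneg_right hsum hW)
      _ = 2 / Real.sqrt ((ℓ:ℝ) * (ν * (1 - ν))) := one_mul _
      _ ≤ 4 / ((ν * (1 - ν)) * Real.sqrt ((ℓ:ℝ) + (k:ℝ))) :=
          tail_bound hs0 hs4 hlr hkr.le hkl
      _ = 4 / (ν * (1 - ν) * Real.sqrt ((k:ℕ) + (ℓ:ℕ) : ℝ)) := by
          rw [add_comm (ℓ:ℝ) (k:ℝ)]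
end

section
/- Let 0 < ν < 1 and let S_{k,ℓ} = S_k^{(ν)} + S_ℓ^{(1−ν)} be the sum of independent binomial random variables with parameters (k, ν) and (ℓ, 1−ν). Then there exists a universal constant C > 0 such that for all integers k, ℓ > 1 and all 0 ≤ i ≤ k+ℓ−1, |P(S_{k,ℓ} = i+1) − P(S_{k,ℓ} = i)| ≤ C/(ν(1−ν)(k+ℓ)). -/
open Real Complex intervalIntegral Finset

private lemma intExp (m : ℤ) : (∫ t in (-π)..π, Complex.exp (m * t * I)) =
    if m = 0 then (2*π:ℝ) else 0 := by
  split_ifs with h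
  · subst h; simp [two_mul]
  · have hc : (m : ℂ) * I ≠ 0 := by simp [Complex.ext_iff, h]
    have he : ∀ t : ℝ, Complex.exp (m * t * I) = Complex.exp ((m * I) * t) := by
      intro t; ring_nf
    simp only [he]
    rw [integral_exp_mul_complex hc]
    have e1 : (m:ℂ) * I * (π:ℝ) = m * ((π:ℝ) * I) := by ring
    have e2 : (m:ℂ) * I * ((-π:ℝ):ℂ) = (-m) * ((π:ℝ) * I) := by push_cast; ring
    rw [e1, e2]
    rw [show ((m:ℂ) * (↑π * I)) = ((m:ℤ):ℂ) * (↑π * I) by norm_cast,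
        show ((-(m:ℂ)) * (↑π * I)) = ((-m:ℤ):ℂ) * (↑π * I) by push_cast; ring,
        Complex.exp_int_mul, Complex.exp_int_mul, Complex.exp_pi_mul_I,
        zpow_neg, ← inv_zpow, show ((-1:ℂ))⁻¹ = -1 by norm_num, sub_self]
    simp

private lemma extract (a b : ℕ → ℂ) (k ℓ n : ℕ) :
    (∫ t in (-π)..π, (∑ u ∈ range (k+1), a u * Complex.exp (u*t*I)) *
      (∑ v ∈ range (ℓ+1), b v * Complex.exp (v*t*I)) * Complex.exp (-(n:ℂ)*t*I))
    = (2*π:ℝ) * ∑ u ∈ range (k+1), ∑ v ∈ range (ℓ+1),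
        if u + v = n then a u * b v else 0 := by
  have hfe : ∀ t : ℝ, (∑ u ∈ range (k+1), a u * Complex.exp (u*t*I)) *
      (∑ v ∈ range (ℓ+1), b v * Complex.exp (v*t*I)) * Complex.exp (-(n:ℂ)*t*I)
      = ∑ u ∈ range (k+1), ∑ v ∈ range (ℓ+1),
          a u * b v * Complex.exp ((((u:ℤ)+v-n : ℤ):ℂ) * t * I) := by
    intro t
    rw [Finset.sum_mul_sum, Finset.sum_mul]
    refine Finset.sum_congr rfl fun u _ => ?_
    rw [Finset.sum_mul]
    refine Finset.sum_congr rfl fun v _ => ?_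
    have : ((((u:ℤ)+v-n : ℤ)):ℂ) * t * I = ↑u * ↑t * I + (↑v * ↑t * I + -↑n * ↑t * I) := by
      push_cast; ring
    rw [this, Complex.exp_add, Complex.exp_add]; ring
  rw [intervalIntegral.integral_congr (fun t _ => hfe t)]
  rw [intervalIntegral.integral_finset_sum]
  · have : ∀ u ∈ range (k+1), (∫ t in (-π)..π, ∑ v ∈ range (ℓ+1),
        a u * b v * Complex.exp ((((u:ℤ)+v-n : ℤ):ℂ) * t * I))
        = ∑ v ∈ range (ℓ+1), (2*π:ℝ) * if u + v = n then a u * b v else 0 := by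
      intro u _
      rw [intervalIntegral.integral_finset_sum]
      · refine Finset.sum_congr rfl fun v _ => ?_
        rw [intervalIntegral.integral_const_mul, intExp]
        by_cases h : u + v = n
        · have : ((u:ℤ)+v-n : ℤ) = 0 := by omega
          simp [this, h]; ring
        · have : ((u:ℤ)+v-n : ℤ) ≠ 0 := by omega
          simp [this, h]
      · intro v _
        apply Continuous.intervalIntegrable
        fun_prop
    rw [Finset.sum_congr rfl this, Finset.mul_sum]
    refine Finset.sum_congr rfl fun u _ => (Finset.mul_sum _ _ _).symm
  · intro u _
    apply Continuous.intervalIntegrable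
    fun_prop

private lemma diag (a b : ℕ → ℂ) (k ℓ n : ℕ) (ha : ∀ u, k < u → a u = 0)
    (hb : ∀ v, ℓ < v → b v = 0) :
    (∑ u ∈ range (k+1), ∑ v ∈ range (ℓ+1), if u + v = n then a u * b v else 0)
    = ∑ u ∈ range (n+1), a u * b (n - u) := by
  have step1 : ∀ u : ℕ, (∑ v ∈ range (ℓ+1), if u + v = n then a u * b v else 0)
      = if u ≤ n then a u * b (n - u) else 0 := by
    intro u
    by_cases hu : u ≤ n
    · have : ∀ v ∈ range (ℓ+1), (if u + v = n then a u * b v else 0)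
          = if v = n - u then a u * b v else 0 := by
        intro v _
        congr 1
        simp only [eq_iff_iff]
        omega
      rw [Finset.sum_congr rfl this, Finset.sum_ite_eq' (range (ℓ+1)) (n-u) (fun v => a u * b v)]
      by_cases h2 : n - u ∈ range (ℓ+1)
      · simp [h2, hu]
      · have : b (n - u) = 0 := hb _ (by simp at h2; omega)
        simp [h2, hu, this]
    · have : ∀ v ∈ range (ℓ+1), (if u + v = n then a u * b v else 0) = 0 := by
        intro v _
        have : ¬ (u + v = n) := by omega
        simp [this]
      rw [Finset.sum_congr rfl this]
      simp [hu]
  simp only [step1]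
  rw [show (∑ u ∈ range (k+1), if u ≤ n then a u * b (n - u) else 0)
      = ∑ u ∈ range (k+n+2), if u ≤ n then a u * b (n - u) else 0 from
    Finset.sum_subset (by intro x hx; simp at hx ⊢; omega)
      (fun x _ hx => by
        have hxk : k < x := by simp at hx; omega
        by_cases h : x ≤ n
        · simp [h, ha x hxk]
        · simp [h])]
  rw [← Finset.sum_subset (show range (n+1) ⊆ range (k+n+2) by
        intro x hx; simp at hx ⊢; omega)
      (fun x _ hx => by
        have : ¬ (x ≤ n) := by simp at hx; omega
        simp [this])]
  refine Finset.sum_congr rfl fun u hu => ?_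
  have : u ≤ n := by simp at hu; omega
  simp [this]

private lemma expand (z w : ℂ) (k : ℕ) (t : ℝ) :
    (z + w * Complex.exp (t*I))^k
    = ∑ u ∈ range (k+1), ((k.choose u : ℂ) * w^u * z^(k-u)) * Complex.exp (u*t*I) := by
  rw [add_comm z, add_pow]
  refine Finset.sum_congr rfl fun u _ => ?_
  rw [mul_pow, ← Complex.exp_nat_mul]
  ring_nf

private lemma reprS (ν : ℝ) (k ℓ n : ℕ) :
    (∫ t in (-π)..π, ((1-(ν:ℂ)) + ν * Complex.exp (t*I))^k *
      ((ν:ℂ) + (1-(ν:ℂ)) * Complex.exp (t*I))^ℓ * Complex.exp (-(n:ℂ)*t*I))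
    = (2*π:ℝ) * ((sumBinomPMF k ℓ ν n : ℝ) : ℂ) := by
  set a : ℕ → ℂ := fun u => ((binomPMF k ν u : ℝ) : ℂ) with ha_def
  set b : ℕ → ℂ := fun v => ((binomPMF ℓ (1-ν) v : ℝ) : ℂ) with hb_def
  have hA : ∀ t : ℝ, ((1-(ν:ℂ)) + ν * Complex.exp (t*I))^k
      = ∑ u ∈ range (k+1), a u * Complex.exp (u*t*I) := by
    intro t; rw [expand]
    refine Finset.sum_congr rfl fun u _ => ?_
    simp only [ha_def, binomPMF]; push_cast; ring
  have hB : ∀ t : ℝ, ((ν:ℂ) + (1-(ν:ℂ)) * Complex.exp (t*I))^ℓ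
      = ∑ v ∈ range (ℓ+1), b v * Complex.exp (v*t*I) := by
    intro t; rw [expand]
    refine Finset.sum_congr rfl fun v _ => ?_
    simp only [hb_def, binomPMF]
    have : (1:ℝ) - (1 - ν) = ν := by ring
    rw [this]; push_cast; ring
  simp only [hA, hB]
  rw [extract, diag a b k ℓ n
    (fun u hu => by simp [ha_def, binomPMF, Nat.choose_eq_zero_of_lt hu])
    (fun v hv => by simp [hb_def, binomPMF, Nat.choose_eq_zero_of_lt hv])]
  congr 1
  simp only [ha_def, hb_def, sumBinomPMF]
  norm_cast

private lemma absBound (p : ℝ) (hp0 : 0 ≤ p) (hp1 : p ≤ 1) (t : ℝ) :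
    ‖(1-(p:ℂ)) + p * Complex.exp (t*I)‖
      ≤ Real.exp (-(p*(1-p)*(1-Real.cos t))) := by
  have hz : (1-(p:ℂ)) + p * Complex.exp (t*I)
      = ((1 - p + p * Real.cos t : ℝ) : ℂ) + ((p * Real.sin t : ℝ) : ℂ) * I := by
    rw [Complex.exp_mul_I]
    push_cast [← Complex.ofReal_cos, ← Complex.ofReal_sin]
    ring
  rw [hz, Complex.norm_add_mul_I]
  have hkey : (1 - p + p * Real.cos t)^2 + (p * Real.sin t)^2
      = 1 - 2 * (p*(1-p)*(1-Real.cos t)) := by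
    linear_combination (p^2) * (Real.sin_sq_add_cos_sq t)
  rw [hkey]
  set x := p*(1-p)*(1-Real.cos t)
  have h1 : 1 - 2*x ≤ Real.exp (-(2*x)) := by
    have := Real.add_one_le_exp (-(2*x)); linarith
  calc Real.sqrt (1 - 2*x) ≤ Real.sqrt (Real.exp (-(2*x))) := Real.sqrt_le_sqrt h1
    _ = Real.exp (-x) := by
        rw [show -(2*x) = -x + -x by ring, Real.exp_add, Real.sqrt_mul_self (Real.exp_pos _).le]

private lemma absExpSub (t : ℝ) : ‖Complex.exp (-(t:ℂ)*I) - 1‖ ≤ |t| := by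
  have hz : Complex.exp (-(t:ℂ)*I) - 1
      = ((Real.cos t - 1 : ℝ) : ℂ) + ((-Real.sin t : ℝ) : ℂ) * I := by
    rw [show -(t:ℂ)*I = ((-t : ℝ):ℂ) * I by push_cast; ring, Complex.exp_mul_I,
      show ((-t:ℝ):ℂ) = -(t:ℂ) by push_cast; ring, Complex.cos_neg, Complex.sin_neg,
      ← Complex.ofReal_cos, ← Complex.ofReal_sin]
    push_cast
    ring
  rw [hz, Complex.norm_add_mul_I]
  have h1 : (Real.cos t - 1)^2 + (-Real.sin t)^2 ≤ t^2 := by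
    have h2 := Real.one_sub_sq_div_two_le_cos (x := t)
    have h3 := Real.sin_sq_add_cos_sq t
    have h4 := Real.cos_le_one t
    nlinarith
  calc Real.sqrt ((Real.cos t - 1)^2 + (-Real.sin t)^2) ≤ Real.sqrt (t^2) :=
        Real.sqrt_le_sqrt h1
    _ = |t| := Real.sqrt_sq_eq_abs t

private lemma gaussInt (c : ℝ) (hc : 0 < c) :
    (∫ t in (-π)..π, |t| * Real.exp (-(c*t^2))) ≤ 1/c := by
  have hcont : Continuous fun t : ℝ => |t| * Real.exp (-(c*t^2)) := by fun_prop
  have hi1 : IntervalIntegrable (fun t : ℝ => |t| * Real.exp (-(c*t^2))) MeasureTheory.volume (-π) 0 :=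
    hcont.intervalIntegrable _ _
  have hi2 : IntervalIntegrable (fun t : ℝ => |t| * Real.exp (-(c*t^2))) MeasureTheory.volume 0 π :=
    hcont.intervalIntegrable _ _
  rw [← intervalIntegral.integral_add_adjacent_intervals hi1 hi2]
  have hA : ∀ t : ℝ, HasDerivAt (fun s : ℝ => Real.exp (-(c*s^2))/(2*c))
      (-(t * Real.exp (-(c*t^2)))) t := by
    intro t
    have h1 : HasDerivAt (fun s : ℝ => -(c*s^2)) (-(2*c*t)) t := by
      have := ((hasDerivAt_pow 2 t).const_mul c).neg
      exact this.congr_deriv (by simp; ring)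
    have h2 := (h1.exp).div_const (2*c)
    exact h2.congr_deriv (by field_simp)
  have e1 : (∫ t in (-π)..(0:ℝ), |t| * Real.exp (-(c*t^2)))
      = 1/(2*c) - Real.exp (-(c*π^2))/(2*c) := by
    have hcong : ∀ t ∈ Set.uIcc (-π) (0:ℝ), |t| * Real.exp (-(c*t^2))
        = -(t * Real.exp (-(c*t^2))) := by
      intro t ht
      rw [Set.uIcc_of_le (by linarith [Real.pi_pos] : -π ≤ (0:ℝ))] at ht
      rw [abs_of_nonpos ht.2]; ring
    rw [intervalIntegral.integral_congr hcong,
      intervalIntegral.integral_eq_sub_of_hasDerivAt (fun t _ => hA t)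
        ((by fun_prop : Continuous fun t : ℝ => -(t * Real.exp (-(c*t^2)))).intervalIntegrable _ _)]
    norm_num
  have hB : ∀ t : ℝ, HasDerivAt (fun s : ℝ => -(Real.exp (-(c*s^2))/(2*c)))
      (t * Real.exp (-(c*t^2))) t := by
    intro t
    have := (hA t).neg
    simp only [neg_neg] at this
    exact this
  have e2 : (∫ t in (0:ℝ)..π, |t| * Real.exp (-(c*t^2)))
      = Real.exp (-(c*0^2))/(2*c) - Real.exp (-(c*π^2))/(2*c) := by
    have hcong : ∀ t ∈ Set.uIcc (0:ℝ) π, |t| * Real.exp (-(c*t^2))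
        = t * Real.exp (-(c*t^2)) := by
      intro t ht
      rw [Set.uIcc_of_le (by positivity : (0:ℝ) ≤ π)] at ht
      rw [_root_.abs_of_nonneg ht.1]
    rw [intervalIntegral.integral_congr hcong,
      intervalIntegral.integral_eq_sub_of_hasDerivAt (fun t _ => hB t)
        ((by fun_prop : Continuous fun t : ℝ => t * Real.exp (-(c*t^2))).intervalIntegrable _ _)]
    ring
  rw [e1, e2]
  have h3 : (0:ℝ) < Real.exp (-(c*π^2)) := Real.exp_pos _
  have h4 : Real.exp (-(c*0^2)) = 1 := by norm_num
  rw [h4]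
  have h6 : 0 < Real.exp (-(c*π^2)) / (2*c) := by positivity
  have h7 : 1 / (2*c) + 1 / (2*c) = 1/c := by
    rw [← add_div, div_eq_div_iff (by linarith : (2*c:ℝ) ≠ 0) hc.ne']; ring
  linarith

theorem sumBinom_difference_bound :
    ∃ C > (0 : ℝ), ∀ ν : ℝ, 0 < ν → ν < 1 → ∀ k ℓ i : ℕ, 1 < k → 1 < ℓ →
      i ≤ k + ℓ - 1 →
      |sumBinomPMF k ℓ ν (i + 1) - sumBinomPMF k ℓ ν i|
        ≤ C / (ν * (1 - ν) * (k + ℓ)) := by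
  refine ⟨1, one_pos, fun ν hν0 hν1 k ℓ i hk hℓ _ => ?_⟩
  have hπ := Real.pi_pos
  have hpq : (0:ℝ) < ν * (1 - ν) := mul_pos hν0 (by linarith)
  have hN : (0:ℝ) < (k:ℝ) + ℓ := by
    have : (2:ℝ) ≤ (k:ℝ) := by exact_mod_cast hk
    have : (0:ℝ) ≤ (ℓ:ℝ) := Nat.cast_nonneg ℓ
    linarith
  set c : ℝ := 2 * (ν * (1 - ν)) * ((k:ℝ) + ℓ) / π^2 with hc_def
  have hc : 0 < c := by positivity
  set φ : ℝ → ℂ := fun t => ((1-(ν:ℂ)) + ν * Complex.exp (t*I))^k *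
      ((ν:ℂ) + (1-(ν:ℂ)) * Complex.exp (t*I))^ℓ with hφ_def
  have hφcont : Continuous φ := by fun_prop
  have hint : ∀ n : ℕ, IntervalIntegrable
      (fun t : ℝ => φ t * Complex.exp (-(n:ℂ)*t*I)) MeasureTheory.volume (-π) π := by
    intro n
    apply Continuous.intervalIntegrable
    fun_prop
  set Δ : ℝ := sumBinomPMF k ℓ ν (i + 1) - sumBinomPMF k ℓ ν i with hΔ_def
  have key : ((2*π:ℝ):ℂ) * (Δ:ℂ)
      = ∫ t in (-π)..π, φ t * (Complex.exp (-((i+1:ℕ):ℂ)*t*I) - Complex.exp (-(i:ℂ)*t*I)) := by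
    have h1 : ∀ t : ℝ, φ t * (Complex.exp (-((i+1:ℕ):ℂ)*t*I) - Complex.exp (-(i:ℂ)*t*I))
        = φ t * Complex.exp (-((i+1:ℕ):ℂ)*t*I) - φ t * Complex.exp (-(i:ℂ)*t*I) := by
      intro t; ring
    simp only [h1]
    rw [intervalIntegral.integral_sub (hint (i+1)) (hint i)]
    simp only [hφ_def]
    rw [reprS ν k ℓ (i+1), reprS ν k ℓ i]
    push_cast [hΔ_def]
    ring
  have habs : |Δ| * (2*π)
      = ‖∫ t in (-π)..π,
          φ t * (Complex.exp (-((i+1:ℕ):ℂ)*t*I) - Complex.exp (-(i:ℂ)*t*I))‖ := by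
    rw [← key, norm_mul, Complex.norm_real, Complex.norm_real, Real.norm_eq_abs, Real.norm_eq_abs,
      abs_of_pos (by linarith : (0:ℝ) < 2*π)]
    ring
  have hptwise : ∀ t ∈ Set.Icc (-π) π,
      ‖φ t * (Complex.exp (-((i+1:ℕ):ℂ)*t*I) - Complex.exp (-(i:ℂ)*t*I))‖
      ≤ |t| * Real.exp (-(c*t^2)) := by
    intro t ht
    rw [norm_mul]
    have hsplit : Complex.exp (-((i+1:ℕ):ℂ)*t*I) - Complex.exp (-(i:ℂ)*t*I)
        = Complex.exp (-(i:ℂ)*t*I) * (Complex.exp (-(t:ℂ)*I) - 1) := by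
      rw [mul_sub, ← Complex.exp_add, mul_one]
      congr 2
      push_cast
      ring
    have h2 : ‖Complex.exp (-((i+1:ℕ):ℂ)*t*I) - Complex.exp (-(i:ℂ)*t*I)‖ ≤ |t| := by
      rw [hsplit, norm_mul]
      have : ‖Complex.exp (-(i:ℂ)*t*I)‖ = 1 := by
        rw [Complex.norm_exp]
        simp
      rw [this, one_mul]
      exact absExpSub t
    have hφb : ‖φ t‖ ≤ Real.exp (-(c*t^2)) := by
      have hb1 := absBound ν hν0.le hν1.le t
      have hb2' := absBound (1-ν) (by linarith) (by linarith) t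
      have hb2 : ‖(ν:ℂ) + (1-(ν:ℂ)) * Complex.exp (t*I)‖
          ≤ Real.exp (-(ν*(1-ν)*(1-Real.cos t))) := by
        have e : (1-(((1-ν:ℝ)):ℂ)) + ((1-ν:ℝ):ℂ) * Complex.exp (t*I)
            = (ν:ℂ) + (1-(ν:ℂ)) * Complex.exp (t*I) := by push_cast; ring
        have e2 : (1-ν)*(1-(1-ν))*(1-Real.cos t) = ν*(1-ν)*(1-Real.cos t) := by ring
        rw [e, e2] at hb2'
        exact hb2'
      have hcos : 1 - Real.cos t ≥ 2/π^2 * t^2 := by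
        have := Real.cos_le_one_sub_mul_cos_sq (x := t) (abs_le.mpr ⟨ht.1, ht.2⟩)
        linarith
      have hx : 0 ≤ ν*(1-ν)*(1-Real.cos t) :=
        mul_nonneg (mul_nonneg hν0.le (by linarith)) (by linarith [Real.cos_le_one t])
      calc ‖φ t‖
          = ‖(1-(ν:ℂ)) + ν * Complex.exp (t*I)‖^k *
            ‖(ν:ℂ) + (1-(ν:ℂ)) * Complex.exp (t*I)‖^ℓ := by
            rw [hφ_def]; simp [norm_mul, norm_pow]
        _ ≤ Real.exp (-(ν*(1-ν)*(1-Real.cos t)))^k *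
            Real.exp (-(ν*(1-ν)*(1-Real.cos t)))^ℓ := by
            exact mul_le_mul (pow_le_pow_left₀ (norm_nonneg _) hb1 k)
              (pow_le_pow_left₀ (norm_nonneg _) hb2 ℓ)
              (pow_nonneg (norm_nonneg _) ℓ) (pow_nonneg (Real.exp_pos _).le k)
        _ = Real.exp (-(((k:ℝ)+ℓ) * (ν*(1-ν)*(1-Real.cos t)))) := by
            rw [← Real.exp_nat_mul, ← Real.exp_nat_mul, ← Real.exp_add]
            congr 1
            ring
        _ ≤ Real.exp (-(c*t^2)) := by
            apply Real.exp_le_exp.mpr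
            have : c * t^2 ≤ ((k:ℝ)+ℓ) * (ν*(1-ν)*(1-Real.cos t)) := by
              rw [hc_def]
              rw [div_mul_eq_mul_div, div_le_iff₀ (by positivity : (0:ℝ) < π^2)]
              have h8 : ((k:ℝ)+ℓ) * (ν*(1-ν)) * (2 * t^2) ≤
                  ((k:ℝ)+ℓ) * (ν*(1-ν)) * ((1-Real.cos t) * π^2) := by
                apply mul_le_mul_of_nonneg_left _ (by positivity)
                calc 2 * t^2 = (2/π^2 * t^2) * π^2 := by field_simp
                  _ ≤ (1-Real.cos t) * π^2 := by
                      apply mul_le_mul_of_nonneg_right hcos (by positivity)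
              calc 2 * (ν * (1 - ν)) * ((k:ℝ) + ℓ) * t^2
                  = ((k:ℝ)+ℓ) * (ν*(1-ν)) * (2 * t^2) := by ring
                _ ≤ ((k:ℝ)+ℓ) * (ν*(1-ν)) * ((1-Real.cos t) * π^2) := h8
                _ = ((k:ℝ)+ℓ) * (ν*(1-ν)*(1-Real.cos t)) * π^2 := by ring
            linarith
    calc ‖φ t‖ * ‖Complex.exp (-((i+1:ℕ):ℂ)*t*I) - Complex.exp (-(i:ℂ)*t*I)‖
        ≤ Real.exp (-(c*t^2)) * |t| :=
          mul_le_mul hφb h2 (norm_nonneg _) (Real.exp_pos _).le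
      _ = |t| * Real.exp (-(c*t^2)) := mul_comm _ _
  have hcont2 : Continuous (fun t : ℝ =>
      φ t * (Complex.exp (-((i+1:ℕ):ℂ)*t*I) - Complex.exp (-(i:ℂ)*t*I))) := by fun_prop
  have hbound : |Δ| * (2*π) ≤ 1/c := by
    rw [habs]
    calc ‖∫ t in (-π)..π,
            φ t * (Complex.exp (-((i+1:ℕ):ℂ)*t*I) - Complex.exp (-(i:ℂ)*t*I))‖
        ≤ ∫ t in (-π)..π,
            ‖φ t * (Complex.exp (-((i+1:ℕ):ℂ)*t*I) - Complex.exp (-(i:ℂ)*t*I))‖ :=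
          intervalIntegral.norm_integral_le_integral_norm (by linarith : -π ≤ π)
      _ ≤ ∫ t in (-π)..π, |t| * Real.exp (-(c*t^2)) := by
          apply intervalIntegral.integral_mono_on (by linarith : -π ≤ π)
          · exact hcont2.norm.intervalIntegrable _ _
          · apply Continuous.intervalIntegrable
            fun_prop
          · intro t ht
            exact hptwise t ht
      _ ≤ 1/c := gaussInt c hc
  -- conclude
  have hfinal : |Δ| ≤ 1/(c * (2*π)) := by
    rw [div_mul_eq_div_div]
    rw [le_div_iff₀ (by linarith : (0:ℝ) < 2*π)]
    exact hbound
  refine hfinal.trans ?_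
  have hπ4 : π ≤ 4 := by linarith [Real.pi_le_four]
  have hX : (0:ℝ) < ν * (1 - ν) * ((k:ℝ) + ℓ) := mul_pos hpq hN
  apply one_div_le_one_div_of_le hX
  rw [hc_def]
  have hexp : 2 * (ν * (1 - ν)) * ((k:ℝ) + ℓ) / π ^ 2 * (2 * π)
      = 4 * (ν * (1-ν) * ((k:ℝ)+ℓ)) / π := by
    field_simp
    ring
  rw [hexp, le_div_iff₀ hπ]
  nlinarith [hX, hπ4]
end

section
/- Let α, β ∈ ℝ with |α| + |β| < 1 and let {ε_{i,j}} be i.i.d. with mean 0 and variance 1. Then for each (k,ℓ) ∈ ℤ² the series X_{k,ℓ} = Σ_{(i,j): i ≤ k, j ≤ ℓ} C(k+ℓ−i−j, k−i) α^{k−i} β^{ℓ−j} ε_{i,j} converges in L², and X_{k,ℓ} satisfies X_{k,ℓ} = α X_{k−1,ℓ} + β X_{k,ℓ−1} + ε_{k,ℓ}. -/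
open MeasureTheory
open scoped RealInnerProductSpace

private lemma coef_summable {x y : ℝ} (hx : 0 ≤ x) (hy : 0 ≤ y) (hxy : x + y < 1) :
    Summable (fun ij : ℕ × ℕ => ((ij.1 + ij.2).choose ij.1 : ℝ) * x ^ ij.1 * y ^ ij.2) := by
  have hgeo : Summable (fun n : ℕ => (x + y) ^ n) :=
    summable_geometric_of_lt_one (by positivity) hxy
  have hprod : Summable (fun ij : ℕ × ℕ => (x + y) ^ ij.1 * (x + y) ^ ij.2) :=
    hgeo.mul_of_nonneg hgeo (fun n => by positivity) (fun n => by positivity)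
  refine hprod.of_nonneg_of_le (fun ij => by positivity) ?_
  rintro ⟨i, j⟩
  have hle : ((i + j).choose i : ℝ) * x ^ i * y ^ j ≤ (x + y) ^ (i + j) := by
    rw [add_pow]
    have hi : i ∈ Finset.range (i + j + 1) := by
      simp [Nat.lt_succ_iff]
    have := Finset.single_le_sum
      (f := fun k => x ^ k * y ^ (i + j - k) * ((i + j).choose k : ℝ))
      (fun k _ => by positivity) hi
    simpa [Nat.add_sub_cancel_left, mul_comm, mul_assoc, mul_left_comm] using this
  calc ((i + j).choose i : ℝ) * x ^ i * y ^ j ≤ (x + y) ^ (i + j) := hle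
    _ = (x + y) ^ i * (x + y) ^ j := by rw [pow_add]

private lemma vec_summable {E : Type*} [NormedAddCommGroup E] [NormedSpace ℝ E]
    [CompleteSpace E] {α β : ℝ} (h : |α| + |β| < 1) (v : ℕ × ℕ → E)
    (hv : ∀ ij, ‖v ij‖ ≤ 1) :
    Summable (fun ij : ℕ × ℕ =>
      (((ij.1 + ij.2).choose ij.1 : ℝ) * α ^ ij.1 * β ^ ij.2) • v ij) := by
  refine Summable.of_norm ?_
  have hc := coef_summable (abs_nonneg α) (abs_nonneg β) h
  refine hc.of_nonneg_of_le (fun ij => norm_nonneg _) ?_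
  rintro ⟨i, j⟩
  have h1 : ‖(((i + j).choose i : ℝ) * α ^ i * β ^ j) • v (i, j)‖
      = |((i + j).choose i : ℝ) * α ^ i * β ^ j| * ‖v (i, j)‖ := by
    rw [norm_smul, Real.norm_eq_abs]
  rw [h1]
  have h2 : |((i + j).choose i : ℝ) * α ^ i * β ^ j|
      = ((i + j).choose i : ℝ) * |α| ^ i * |β| ^ j := by
    rw [abs_mul, abs_mul, abs_pow, abs_pow, Nat.abs_cast]
  rw [h2]
  calc ((i + j).choose i : ℝ) * |α| ^ i * |β| ^ j * ‖v (i, j)‖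
      ≤ ((i + j).choose i : ℝ) * |α| ^ i * |β| ^ j * 1 := by
        apply mul_le_mul_of_nonneg_left (hv _) (by positivity)
    _ = ((i + j).choose i : ℝ) * |α| ^ i * |β| ^ j := mul_one _

private lemma Lp_coeFn_finset_sum {Ω : Type*} [MeasurableSpace Ω] {μ : Measure Ω}
    {ι : Type*} (s : Finset ι) (f : ι → Lp ℝ 2 μ) :
    ⇑(∑ i ∈ s, f i) =ᵐ[μ] fun ω => ∑ i ∈ s, f i ω := by
  classical
  induction s using Finset.induction_on with
  | empty => simpa [Pi.zero_def] using Lp.coeFn_zero (E := ℝ) (p := 2) (μ := μ)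
  | insert a s hni ih =>
    rw [Finset.sum_insert hni]
    filter_upwards [Lp.coeFn_add (f a) (∑ i ∈ s, f i), ih] with ω h1 h2
    simp only [Finset.sum_insert hni, h1, Pi.add_apply, h2, Finset.sum_apply]

set_option maxHeartbeats 2000000 in
theorem stationary_solution_exists {Ω : Type*} [MeasurableSpace Ω] (μ : Measure Ω)
    [IsProbabilityMeasure μ] (α β : ℝ) (h : |α| + |β| < 1)
    (ε : ℤ × ℤ → Ω → ℝ)
    (hmeas : ∀ p, Measurable (ε p))
    (hindep : ProbabilityTheory.iIndepFun ε μ)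
    (hident : ∀ p q, Measure.map (ε p) μ = Measure.map (ε q) μ)
    (hmem : ∀ p, MemLp (ε p) 2 μ)
    (hmean : ∀ p, ∫ ω, ε p ω ∂μ = 0)
    (hvar : ∀ p, ∫ ω, (ε p ω) ^ 2 ∂μ = 1) :
    ∃ X : ℤ → ℤ → Ω → ℝ,
      (∀ k ℓ : ℤ,
        Filter.Tendsto
          (fun N => eLpNorm (fun ω => X k ℓ ω -
            ∑ i ∈ Finset.range (N + 1), ∑ j ∈ Finset.range (N + 1),
              (((i + j).choose i : ℕ) : ℝ) * α ^ i * β ^ j *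
                ε (k - i, ℓ - j) ω) 2 μ)
          Filter.atTop (nhds 0)) ∧
      (∀ k ℓ : ℤ, ∀ᵐ ω ∂μ,
        X k ℓ ω = α * X (k - 1) ℓ ω + β * X k (ℓ - 1) ω + ε (k, ℓ) ω) := by
  classical
  -- the noise terms as elements of L²
  set e : ℤ × ℤ → Lp ℝ 2 μ := fun p => (hmem p).toLp (ε p) with he_def
  have henorm : ∀ p, ‖e p‖ = 1 := by
    intro p
    have hinner : (inner ℝ (e p) (e p) : ℝ) = ∫ ω, ε p ω * ε p ω ∂μ := by
      rw [MeasureTheory.L2.inner_def]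
      refine integral_congr_ae ?_
      filter_upwards [MemLp.coeFn_toLp (hmem p)] with ω hω
      simp [he_def, hω, RCLike.inner_apply, sq]
    have hsq : ‖e p‖ ^ 2 = 1 := by
      rw [← real_inner_self_eq_norm_sq, hinner, ← hvar p]
      refine integral_congr_ae (Filter.Eventually.of_forall fun ω => ?_)
      ring
    nlinarith [norm_nonneg (e p)]
  -- the coefficient function
  set c : ℕ × ℕ → ℝ := fun ij => ((ij.1 + ij.2).choose ij.1 : ℝ) * α ^ ij.1 * β ^ ij.2
    with hc_def
  -- summability of the series defining X
  have hsum : ∀ k ℓ : ℤ, Summable (fun ij : ℕ × ℕ =>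
      c ij • e (k - ij.1, ℓ - ij.2)) := by
    intro k ℓ
    exact vec_summable h (fun ij => e (k - ij.1, ℓ - ij.2)) (fun ij => le_of_eq (henorm _))
  set T : ℤ → ℤ → Lp ℝ 2 μ := fun k ℓ => ∑' ij : ℕ × ℕ, c ij • e (k - ij.1, ℓ - ij.2)
    with hT_def
  refine ⟨fun k ℓ => ⇑(T k ℓ), ?_, ?_⟩
  · -- convergence of partial sums in L²
    intro k ℓ
    have hHasSum : HasSum (fun ij : ℕ × ℕ => c ij • e (k - ij.1, ℓ - ij.2)) (T k ℓ) :=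
      (hsum k ℓ).hasSum
    -- the finsets range(N+1) ×ˢ range(N+1) tend to atTop
    have hmono : Monotone (fun N : ℕ => Finset.range (N + 1) ×ˢ Finset.range (N + 1)) := by
      intro m n hmn
      exact Finset.product_subset_product (Finset.range_subset_range.2 (by omega))
        (Finset.range_subset_range.2 (by omega))
    have hcover : ∀ ij : ℕ × ℕ, ∃ N : ℕ,
        ij ∈ Finset.range (N + 1) ×ˢ Finset.range (N + 1) := by
      rintro ⟨i, j⟩
      refine ⟨max i j, ?_⟩
      simp only [Finset.mem_product, Finset.mem_range]
      omega
    have htendF : Filter.Tendsto (fun N : ℕ => Finset.range (N + 1) ×ˢ Finset.range (N + 1))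
        Filter.atTop Filter.atTop := Filter.tendsto_atTop_finset_of_monotone hmono hcover
    have htend : Filter.Tendsto (fun N : ℕ =>
        ∑ ij ∈ Finset.range (N + 1) ×ˢ Finset.range (N + 1), c ij • e (k - ij.1, ℓ - ij.2))
        Filter.atTop (nhds (T k ℓ)) := hHasSum.comp htendF
    have hnorm0 : Filter.Tendsto (fun N : ℕ =>
        ‖T k ℓ - ∑ ij ∈ Finset.range (N + 1) ×ˢ Finset.range (N + 1),
          c ij • e (k - ij.1, ℓ - ij.2)‖) Filter.atTop (nhds 0) := by
      have := (tendsto_iff_norm_sub_tendsto_zero).mp htend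
      simpa [norm_sub_rev] using this
    -- identify eLpNorm with the Lp norm
    have key : ∀ N : ℕ, eLpNorm (fun ω => T k ℓ ω -
        ∑ i ∈ Finset.range (N + 1), ∑ j ∈ Finset.range (N + 1),
          (((i + j).choose i : ℕ) : ℝ) * α ^ i * β ^ j * ε (k - i, ℓ - j) ω) 2 μ
        = ENNReal.ofReal ‖T k ℓ - ∑ ij ∈ Finset.range (N + 1) ×ˢ Finset.range (N + 1),
            c ij • e (k - ij.1, ℓ - ij.2)‖ := by
      intro N
      set SN : Lp ℝ 2 μ := ∑ ij ∈ Finset.range (N + 1) ×ˢ Finset.range (N + 1),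
        c ij • e (k - ij.1, ℓ - ij.2) with hSN_def
      have hae : (fun ω => T k ℓ ω -
          ∑ i ∈ Finset.range (N + 1), ∑ j ∈ Finset.range (N + 1),
            (((i + j).choose i : ℕ) : ℝ) * α ^ i * β ^ j * ε (k - i, ℓ - j) ω)
          =ᵐ[μ] ⇑(T k ℓ - SN) := by
        have hSn_ae : ⇑SN =ᵐ[μ] fun ω =>
            ∑ ij ∈ Finset.range (N + 1) ×ˢ Finset.range (N + 1),
              c ij * ε (k - ij.1, ℓ - ij.2) ω := by
          have h1 := Lp_coeFn_finset_sum (Finset.range (N + 1) ×ˢ Finset.range (N + 1))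
            (fun ij => c ij • e (k - ij.1, ℓ - ij.2))
          have h2 : ∀ ij : ℕ × ℕ, ⇑(c ij • e (k - ij.1, ℓ - ij.2)) =ᵐ[μ]
              fun ω => c ij * ε (k - ij.1, ℓ - ij.2) ω := by
            intro ij
            filter_upwards [Lp.coeFn_smul (c ij) (e (k - ij.1, ℓ - ij.2)),
              MemLp.coeFn_toLp (hmem (k - ij.1, ℓ - ij.2))] with ω hω1 hω2
            rw [hω1]
            simp [he_def, hω2, smul_eq_mul]
          have h3 : ∀ᵐ ω ∂μ, ∀ ij ∈ Finset.range (N + 1) ×ˢ Finset.range (N + 1),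
              (c ij • e (k - ij.1, ℓ - ij.2)) ω = c ij * ε (k - ij.1, ℓ - ij.2) ω := by
            rw [Filter.eventually_all_finset]
            intro ij _
            exact h2 ij
          filter_upwards [h1, h3] with ω hω1 hω3
          rw [hω1]
          exact Finset.sum_congr rfl fun ij hij => hω3 ij hij
        filter_upwards [Lp.coeFn_sub (T k ℓ) SN, hSn_ae] with ω hω1 hω2
        have : ∑ i ∈ Finset.range (N + 1), ∑ j ∈ Finset.range (N + 1),
            (((i + j).choose i : ℕ) : ℝ) * α ^ i * β ^ j * ε (k - i, ℓ - j) ω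
            = ∑ ij ∈ Finset.range (N + 1) ×ˢ Finset.range (N + 1),
              c ij * ε (k - ij.1, ℓ - ij.2) ω := by
          rw [Finset.sum_product]
        rw [this, ← hω2, hω1, Pi.sub_apply]
      rw [eLpNorm_congr_ae hae]
      have := Lp.norm_def (T k ℓ - SN)
      rw [this, ENNReal.ofReal_toReal (Lp.eLpNorm_ne_top _)]
    simp only [key]
    have : Filter.Tendsto (fun N : ℕ => ENNReal.ofReal
        ‖T k ℓ - ∑ ij ∈ Finset.range (N + 1) ×ˢ Finset.range (N + 1),
          c ij • e (k - ij.1, ℓ - ij.2)‖) Filter.atTop (nhds (ENNReal.ofReal 0)) :=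
      (ENNReal.continuous_ofReal.tendsto 0).comp hnorm0
    simpa using this
  · -- the recursion
    intro k ℓ
    -- three pieces of the series
    set A : ℕ × ℕ → Lp ℝ 2 μ := fun ij =>
      if ij.1 = 0 then 0 else
        (((ij.1 - 1 + ij.2).choose (ij.1 - 1) : ℝ) * α ^ ij.1 * β ^ ij.2) •
          e (k - ij.1, ℓ - ij.2) with hA_def
    set B : ℕ × ℕ → Lp ℝ 2 μ := fun ij =>
      if ij.2 = 0 then 0 else
        (((ij.1 + (ij.2 - 1)).choose ij.1 : ℝ) * α ^ ij.1 * β ^ ij.2) •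
          e (k - ij.1, ℓ - ij.2) with hB_def
    set C : ℕ × ℕ → Lp ℝ 2 μ := fun ij =>
      if ij = (0, 0) then e (k, ℓ) else 0 with hC_def
    -- pointwise decomposition
    have hdecomp : ∀ ij : ℕ × ℕ, c ij • e (k - ij.1, ℓ - ij.2) = A ij + B ij + C ij := by
      rintro ⟨i, j⟩
      simp only [hA_def, hB_def, hC_def, hc_def]
      rcases Nat.eq_zero_or_pos i with hi | hi
      · rcases Nat.eq_zero_or_pos j with hj | hj
        · subst hi; subst hj
          simp
        · subst hi
          obtain ⟨j', rfl⟩ := Nat.exists_eq_succ_of_ne_zero hj.ne'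
          simp only [if_pos rfl, if_neg (Nat.succ_ne_zero j'),
            Prod.mk.injEq, if_neg (by simp : ¬((0:ℕ), j' + 1) = ((0:ℕ), (0:ℕ)))]
          simp [Nat.succ_sub_one]
      · obtain ⟨i', rfl⟩ := Nat.exists_eq_succ_of_ne_zero hi.ne'
        rcases Nat.eq_zero_or_pos j with hj | hj
        · subst hj
          simp only [if_neg (Nat.succ_ne_zero i'), if_pos rfl,
            if_neg (by simp : ¬((i' + 1 : ℕ), (0:ℕ)) = ((0:ℕ), (0:ℕ)))]
          simp [Nat.succ_sub_one]
        · obtain ⟨j', rfl⟩ := Nat.exists_eq_succ_of_ne_zero hj.ne'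
          simp only [if_neg (Nat.succ_ne_zero i'), if_neg (Nat.succ_ne_zero j'),
            if_neg (by simp : ¬((i' + 1 : ℕ), (j' + 1 : ℕ)) = ((0:ℕ), (0:ℕ)))]
          rw [add_zero, Nat.succ_sub_one, Nat.succ_sub_one, ← add_smul]
          congr 1
          have hpascal : (i' + 1 + (j' + 1)).choose (i' + 1)
              = (i' + (j' + 1)).choose i' + (i' + 1 + j').choose (i' + 1) := by
            have : i' + 1 + (j' + 1) = (i' + 1 + j') + 1 := by omega
            rw [this, Nat.choose_succ_succ]
            congr 2
            omega
          rw [hpascal]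
          push_cast
          ring
    -- HasSum for A
    have hA : HasSum A (α • T (k - 1) ℓ) := by
      have hbase : HasSum (fun ij : ℕ × ℕ => c ij • e ((k - 1) - ij.1, ℓ - ij.2))
          (T (k - 1) ℓ) := (hsum (k - 1) ℓ).hasSum
      have hsmul : HasSum (fun ij : ℕ × ℕ => α • (c ij • e ((k - 1) - ij.1, ℓ - ij.2)))
          (α • T (k - 1) ℓ) := hbase.const_smul α
      have hinj : Function.Injective (fun ij : ℕ × ℕ => (ij.1 + 1, ij.2)) := by
        rintro ⟨a, b⟩ ⟨a', b'⟩ hab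
        simp only [Prod.mk.injEq] at hab
        exact Prod.ext (by omega) hab.2
      have hvanish : ∀ ij : ℕ × ℕ, ij ∉ Set.range (fun ij : ℕ × ℕ => (ij.1 + 1, ij.2)) →
          A ij = 0 := by
        rintro ⟨i, j⟩ hij
        rcases Nat.eq_zero_or_pos i with hi | hi
        · simp [hA_def, hi]
        · exfalso
          apply hij
          exact ⟨(i - 1, j), by simp [Prod.ext_iff]; omega⟩
      rw [← hinj.hasSum_iff hvanish]
      refine hsmul.congr_fun fun ij => ?_
      rcases ij with ⟨i, j⟩
      simp only [Function.comp_apply, hA_def, hc_def]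
      rw [if_neg (Nat.succ_ne_zero i)]
      have harg : ((k : ℤ) - (↑(i + 1) : ℤ), ℓ - (j : ℤ)) = ((k - 1 : ℤ) - (i : ℤ), ℓ - (j : ℤ)) := by
        simp [Prod.ext_iff]
        push_cast
        ring
      rw [smul_smul]
      simp only [Nat.add_sub_cancel]
      rw [harg]
      congr 1
      push_cast
      ring
    -- HasSum for B
    have hB : HasSum B (β • T k (ℓ - 1)) := by
      have hbase : HasSum (fun ij : ℕ × ℕ => c ij • e (k - ij.1, (ℓ - 1) - ij.2))
          (T k (ℓ - 1)) := (hsum k (ℓ - 1)).hasSum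
      have hsmul : HasSum (fun ij : ℕ × ℕ => β • (c ij • e (k - ij.1, (ℓ - 1) - ij.2)))
          (β • T k (ℓ - 1)) := hbase.const_smul β
      have hinj : Function.Injective (fun ij : ℕ × ℕ => (ij.1, ij.2 + 1)) := by
        rintro ⟨a, b⟩ ⟨a', b'⟩ hab
        simp only [Prod.mk.injEq] at hab
        exact Prod.ext hab.1 (by omega)
      have hvanish : ∀ ij : ℕ × ℕ, ij ∉ Set.range (fun ij : ℕ × ℕ => (ij.1, ij.2 + 1)) →
          B ij = 0 := by
        rintro ⟨i, j⟩ hij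
        rcases Nat.eq_zero_or_pos j with hj | hj
        · simp [hB_def, hj]
        · exfalso
          apply hij
          exact ⟨(i, j - 1), by simp [Prod.ext_iff]; omega⟩
      rw [← hinj.hasSum_iff hvanish]
      refine hsmul.congr_fun fun ij => ?_
      rcases ij with ⟨i, j⟩
      simp only [Function.comp_apply, hB_def, hc_def]
      rw [if_neg (Nat.succ_ne_zero j)]
      have harg : ((k : ℤ) - (i : ℤ), ℓ - (↑(j + 1) : ℤ)) = ((k : ℤ) - (i : ℤ), (ℓ - 1) - (j : ℤ)) := by
        simp [Prod.ext_iff]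
        push_cast
        ring
      rw [smul_smul]
      simp only [Nat.add_sub_cancel]
      rw [harg]
      congr 1
      push_cast
      ring
    -- HasSum for C
    have hC : HasSum C (e (k, ℓ)) := by
      have := hasSum_ite_eq ((0, 0) : ℕ × ℕ) (e (k, ℓ))
      refine this.congr_fun fun ij => ?_
      simp [hC_def, eq_comm]
    -- combine
    have htotal : HasSum (fun ij : ℕ × ℕ => c ij • e (k - ij.1, ℓ - ij.2))
        (α • T (k - 1) ℓ + β • T k (ℓ - 1) + e (k, ℓ)) := by
      have := (hA.add hB).add hC
      exact this.congr_fun hdecomp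
    have hTeq : T k ℓ = α • T (k - 1) ℓ + β • T k (ℓ - 1) + e (k, ℓ) := by
      rw [hT_def]
      exact htotal.tsum_eq
    -- translate to a.e. pointwise identity
    have h1 := Lp.coeFn_add (α • T (k - 1) ℓ + β • T k (ℓ - 1)) (e (k, ℓ))
    have h2 := Lp.coeFn_add (α • T (k - 1) ℓ) (β • T k (ℓ - 1))
    have h3 := Lp.coeFn_smul α (T (k - 1) ℓ)
    have h4 := Lp.coeFn_smul β (T k (ℓ - 1))
    have h5 := MemLp.coeFn_toLp (hmem (k, ℓ))
    filter_upwards [h1, h2, h3, h4, h5] with ω hω1 hω2 hω3 hω4 hω5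
    have : (T k ℓ) ω = (α • T (k - 1) ℓ + β • T k (ℓ - 1) + e (k, ℓ)) ω := by
      rw [hTeq]
    rw [this, hω1, Pi.add_apply, hω2, Pi.add_apply, hω3, hω4]
    simp only [Pi.smul_apply, smul_eq_mul]
    simp only [he_def]
    rw [hω5]
end
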